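/- Let f: 2^E → ℝ≥0 be monotone submodular with multilinear extension F, and let x, y ∈ [0,1]^E and ε ≥ 0 be such that x + ε·y ∈ [0,1]^E. Then F(x + ε·y) - F(x) ≥ ε · ∑_{e∈E} y(e) · (F((x+ε·y) ∨ 1_e) - F(x+ε·y)) / 1, where the sum on the right can be written as ε·∑_e y(e)·E[f_{R(x+εy)}(e)] with R(z) the random set including each e independently with probability z(e). -/

import Mathlib

open Finset

namespace MMGLB

variable {E : Type*} [Fintype E] [DecidableEq E]

noncomputable def Pw (w : E → ℝ) (S : Finset E) : ℝ :=
  (∏ a ∈ S, w a) * ∏ a ∈ Sᶜ, (1 - w a)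

noncomputable def Qw (w : E → ℝ) (e : E) (S : Finset E) : ℝ :=
  (∏ a ∈ S, w a) * ∏ a ∈ (insert e S)ᶜ, (1 - w a)

noncomputable def Gs (g : Finset E → ℝ) (w : E → ℝ) : ℝ := ∑ S : Finset E, g S * Pw w S

noncomputable def Dg (g : Finset E → ℝ) (w : E → ℝ) (e : E) : ℝ :=
  ∑ S ∈ univ.filter (fun S => e ∉ S), (g (insert e S) - g S) * Qw w e S

lemma Pw_insert (w : E → ℝ) {e : E} {S : Finset E} (h : e ∉ S) :
    Pw w (insert e S) = w e * Qw w e S := by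
  unfold Pw Qw
  rw [Finset.prod_insert h]; ring

lemma Pw_not_mem (w : E → ℝ) {e : E} {S : Finset E} (h : e ∉ S) :
    Pw w S = (1 - w e) * Qw w e S := by
  unfold Pw Qw
  rw [compl_insert, ← Finset.mul_prod_erase Sᶜ _ (mem_compl.2 h)]; ring

lemma Qw_nonneg {w : E → ℝ} (hw : ∀ a, w a ∈ Set.Icc (0:ℝ) 1) (e : E) (S : Finset E) :
    0 ≤ Qw w e S := by
  unfold Qw
  apply mul_nonneg
  · exact Finset.prod_nonneg fun a _ => (hw a).1
  · exact Finset.prod_nonneg fun a _ => by linarith [(hw a).2]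

lemma Qw_congr {w w' : E → ℝ} {e : E} (hw : ∀ b, b ≠ e → w b = w' b) {S : Finset E}
    (h : e ∉ S) : Qw w e S = Qw w' e S := by
  unfold Qw
  congr 1
  · exact Finset.prod_congr rfl fun a ha => hw a (fun hae => h (hae ▸ ha))
  · refine Finset.prod_congr rfl fun a ha => ?_
    have : a ≠ e := by
      intro hae; subst hae; exact (mem_compl.1 ha) (mem_insert_self a S)
    rw [hw a this]

lemma L1 (g : Finset E → ℝ) (w : E → ℝ) (e : E) :
    Gs g w = ∑ S ∈ univ.filter (fun S => e ∉ S),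
      (w e * g (insert e S) + (1 - w e) * g S) * Qw w e S := by
  unfold Gs
  rw [← Finset.sum_filter_add_sum_filter_not univ (fun S => e ∉ S)
    (fun S => g S * Pw w S)]
  have h2 : ∑ S ∈ univ.filter (fun S => ¬ e ∉ S), g S * Pw w S
      = ∑ S ∈ univ.filter (fun S => e ∉ S), g (insert e S) * Pw w (insert e S) := by
    refine Finset.sum_bij' (fun S _ => S.erase e) (fun S _ => insert e S) ?_ ?_ ?_ ?_ ?_
    · intro S hS
      simp only [mem_filter, mem_univ, true_and] at hS ⊢
      exact notMem_erase e S
    · intro S hS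
      simp only [mem_filter, mem_univ, true_and, not_not] at hS ⊢
      exact mem_insert_self e S
    · intro S hS
      simp only [mem_filter, mem_univ, true_and, not_not] at hS
      exact insert_erase hS
    · intro S hS
      simp only [mem_filter, mem_univ, true_and] at hS
      exact erase_insert hS
    · intro S hS
      simp only [mem_filter, mem_univ, true_and, not_not] at hS
      rw [insert_erase hS]
  rw [h2, ← Finset.sum_add_distrib]
  refine Finset.sum_congr rfl fun S hS => ?_
  simp only [mem_filter, mem_univ, true_and] at hS
  rw [Pw_insert w hS, Pw_not_mem w hS]
  ring

lemma L2 (g : Finset E → ℝ) {w w' : E → ℝ} {e : E} (hw : ∀ b, b ≠ e → w b = w' b) :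
    Gs g w' - Gs g w = (w' e - w e) * Dg g w e := by
  rw [L1 g w e, L1 g w' e, Dg, Finset.mul_sum, ← Finset.sum_sub_distrib]
  refine Finset.sum_congr rfl fun S hS => ?_
  simp only [mem_filter, mem_univ, true_and] at hS
  rw [← Qw_congr hw hS]
  ring

/-- the auxiliary function for monotonicity -/
noncomputable def ge (f : Finset E → ℝ) (e : E) (S : Finset E) : ℝ :=
  f (insert e (S.erase e)) - f (S.erase e)

lemma Dg_eq (f : Finset E → ℝ) (w : E → ℝ) (e : E) :
    Dg f w e = Gs (ge f e) (Function.update w e 1) := by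
  rw [L1 (ge f e) (Function.update w e 1) e, Dg]
  refine Finset.sum_congr rfl fun S hS => ?_
  simp only [mem_filter, mem_univ, true_and] at hS
  have hq : Qw (Function.update w e 1) e S = Qw w e S := by
    refine (Qw_congr (fun b hb => ?_) hS).symm
    rw [Function.update_of_ne hb]
  rw [hq, Function.update_self]
  have h1 : ge f e (insert e S) = f (insert e S) - f S := by
    unfold ge; rw [erase_insert hS]
  rw [h1]; ring

lemma ge_step_nonpos (f : Finset E → ℝ)
    (hsub : ∀ S T : Finset E, f S + f T ≥ f (S ∩ T) + f (S ∪ T))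
    (e a : E) {S : Finset E} (haS : a ∉ S) :
    ge f e (insert a S) - ge f e S ≤ 0 := by
  by_cases hae : a = e
  · subst hae
    unfold ge
    rw [erase_insert_eq_erase]
    simp
  · unfold ge
    rw [erase_insert_of_ne hae]
    set T := S.erase e with hT
    have heT : e ∉ T := notMem_erase e S
    have haT : a ∉ T := fun h => haS (mem_of_mem_erase h)
    have hinter : insert e T ∩ insert a T = T := by
      rw [insert_inter_of_notMem (by simp [Ne.symm hae, heT]),
        inter_insert_of_notMem haT, inter_self]
    have hunion : insert e T ∪ insert a T = insert e (insert a T) := by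
      rw [insert_union, union_insert, union_self]
    have := hsub (insert e T) (insert a T)
    rw [hinter, hunion] at this
    linarith

lemma Gs_mono (f : Finset E → ℝ)
    (hsub : ∀ S T : Finset E, f S + f T ≥ f (S ∩ T) + f (S ∪ T))
    (e : E) (u v : E → ℝ)
    (hu : ∀ a, u a ∈ Set.Icc (0:ℝ) 1) (hv : ∀ a, v a ∈ Set.Icc (0:ℝ) 1)
    (huv : ∀ a, u a ≤ v a) :
    ∀ A : Finset E, Gs (ge f e) (fun b => if b ∈ A then v b else u b) ≤ Gs (ge f e) u := by
  intro A
  induction A using Finset.induction_on with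
  | empty => simp
  | @insert a A ha ih =>
    set m : E → ℝ := fun b => if b ∈ A then v b else u b with hm
    set m' : E → ℝ := fun b => if b ∈ insert a A then v b else u b with hm'
    have hagree : ∀ b, b ≠ a → m b = m' b := by
      intro b hb
      simp only [hm, hm', mem_insert, hb, false_or]
    have hmIcc : ∀ b, m b ∈ Set.Icc (0:ℝ) 1 := by
      intro b; simp only [hm]; split <;> [exact hv b; exact hu b]
    have hdiff := L2 (ge f e) hagree
    have hDneg : Dg (ge f e) m a ≤ 0 := by
      unfold Dg
      refine Finset.sum_nonpos fun S hS => ?_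
      simp only [mem_filter, mem_univ, true_and] at hS
      exact mul_nonpos_of_nonpos_of_nonneg (ge_step_nonpos f hsub e a hS)
        (Qw_nonneg hmIcc a S)
    have hma : m a = u a := by simp [hm, ha]
    have hm'a : m' a = v a := by simp [hm']
    have : Gs (ge f e) m' - Gs (ge f e) m ≤ 0 := by
      rw [hdiff, hm'a, hma]
      exact mul_nonpos_of_nonneg_of_nonpos (by linarith [huv a]) hDneg
    linarith

lemma Dg_mono (f : Finset E → ℝ)
    (hsub : ∀ S T : Finset E, f S + f T ≥ f (S ∩ T) + f (S ∪ T))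
    (e : E) (u v : E → ℝ)
    (hu : ∀ a, u a ∈ Set.Icc (0:ℝ) 1) (hv : ∀ a, v a ∈ Set.Icc (0:ℝ) 1)
    (huv : ∀ a, u a ≤ v a) :
    Dg f v e ≤ Dg f u e := by
  rw [Dg_eq, Dg_eq]
  set u' := Function.update u e 1 with hu'
  set v' := Function.update v e 1 with hv'
  have hu'Icc : ∀ a, u' a ∈ Set.Icc (0:ℝ) 1 := by
    intro a
    rcases eq_or_ne a e with h | h
    · subst h; simp [hu']
    · simp only [hu', Function.update_of_ne h]; exact hu a
  have hv'Icc : ∀ a, v' a ∈ Set.Icc (0:ℝ) 1 := by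
    intro a
    rcases eq_or_ne a e with h | h
    · subst h; simp [hv']
    · simp only [hv', Function.update_of_ne h]; exact hv a
  have huv' : ∀ a, u' a ≤ v' a := by
    intro a
    rcases eq_or_ne a e with h | h
    · subst h; simp [hu', hv']
    · simp only [hu', hv', Function.update_of_ne h]; exact huv a
  have := Gs_mono f hsub e u' v' hu'Icc hv'Icc huv' univ
  have hfun : (fun b => if b ∈ (univ : Finset E) then v' b else u' b) = v' := by
    funext b; simp
  rwa [hfun] at this

end MMGLB

open MMGLB in
theorem multilinear_marginal_gain_lower_bound
    {E : Type*} [Fintype E] [DecidableEq E]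
    (f : Finset E → ℝ) (hnn : ∀ S, 0 ≤ f S)
    (hmono : ∀ S T : Finset E, S ⊆ T → f S ≤ f T)
    (hsub : ∀ S T : Finset E, f S + f T ≥ f (S ∩ T) + f (S ∪ T))
    (F : (E → ℝ) → ℝ)
    (hF : ∀ x : E → ℝ, F x = ∑ S : Finset E,
      f S * (∏ e ∈ S, x e) * ∏ e ∈ Sᶜ, (1 - x e))
    (x y : E → ℝ) (ε : ℝ) (hε : 0 ≤ ε)
    (hx : ∀ e, x e ∈ Set.Icc (0:ℝ) 1)
    (hy : ∀ e, y e ∈ Set.Icc (0:ℝ) 1)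
    (hxy : ∀ e, x e + ε * y e ∈ Set.Icc (0:ℝ) 1) :
    F (fun e => x e + ε * y e) - F x ≥
      ε * ∑ e : E, y e *
        (∑ S : Finset E, ((∏ a ∈ S, (x a + ε * y a)) *
          ∏ a ∈ Sᶜ, (1 - (x a + ε * y a))) * (f (insert e S) - f S)) := by
  set z : E → ℝ := fun e => x e + ε * y e with hz
  have hzIcc : ∀ e, z e ∈ Set.Icc (0:ℝ) 1 := hxy
  have hFg : ∀ w : E → ℝ, F w = Gs f w := by
    intro w
    rw [hF w]
    exact Finset.sum_congr rfl fun S _ => by rw [Pw]; ring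
  have hxz : ∀ a, x a ≤ z a := by
    intro a
    have := mul_nonneg hε (hy a).1
    simp only [hz]; linarith
  -- main induction
  have key : ∀ A : Finset E,
      ∑ e ∈ A, (z e - x e) * Dg f z e
        ≤ Gs f (fun b => if b ∈ A then z b else x b) - Gs f x := by
    intro A
    induction A using Finset.induction_on with
    | empty => simp
    | @insert a A ha ih =>
      set m : E → ℝ := fun b => if b ∈ A then z b else x b with hm
      set m' : E → ℝ := fun b => if b ∈ insert a A then z b else x b with hm'
      have hagree : ∀ b, b ≠ a → m b = m' b := by
        intro b hb
        simp only [hm, hm', mem_insert, hb, false_or]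
      have hmIcc : ∀ b, m b ∈ Set.Icc (0:ℝ) 1 := by
        intro b; simp only [hm]; split <;> [exact hzIcc b; exact hx b]
      have hmz : ∀ b, m b ≤ z b := by
        intro b; simp only [hm]; split <;> [exact le_refl _; exact hxz b]
      have hdiff := L2 f hagree
      have hma : m a = x a := by simp [hm, ha]
      have hm'a : m' a = z a := by simp [hm']
      have hDmono : Dg f z a ≤ Dg f m a :=
        Dg_mono f hsub a m z hmIcc hzIcc hmz
      have hstep : (z a - x a) * Dg f z a ≤ Gs f m' - Gs f m := by
        rw [hdiff, hm'a, hma]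
        exact mul_le_mul_of_nonneg_left hDmono (by linarith [hxz a])
      rw [Finset.sum_insert ha]
      linarith
  have hfin := key univ
  have hfun : (fun b => if b ∈ (univ : Finset E) then z b else x b) = z := by
    funext b; simp
  rw [hfun] at hfin
  -- bound the RHS by the sum with Dg
  have hinner : ∀ e : E,
      (∑ S : Finset E, ((∏ a ∈ S, z a) * ∏ a ∈ Sᶜ, (1 - z a)) * (f (insert e S) - f S))
        ≤ Dg f z e := by
    intro e
    rw [← Finset.sum_filter_add_sum_filter_not univ (fun S => e ∉ S)]
    have h0 : ∑ S ∈ univ.filter (fun S => ¬ e ∉ S),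
        ((∏ a ∈ S, z a) * ∏ a ∈ Sᶜ, (1 - z a)) * (f (insert e S) - f S) = 0 := by
      refine Finset.sum_eq_zero fun S hS => ?_
      simp only [mem_filter, mem_univ, true_and, not_not] at hS
      rw [insert_eq_self.2 hS]; ring
    rw [h0, add_zero, Dg]
    refine Finset.sum_le_sum fun S hS => ?_
    simp only [mem_filter, mem_univ, true_and] at hS
    have hP : (∏ a ∈ S, z a) * ∏ a ∈ Sᶜ, (1 - z a) = (1 - z e) * Qw z e S :=
      Pw_not_mem z hS
    rw [hP]
    have hQ : 0 ≤ Qw z e S := Qw_nonneg hzIcc e S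
    have hΔ : 0 ≤ f (insert e S) - f S := by
      have := hmono S (insert e S) (subset_insert e S)
      linarith
    have hze : 1 - z e ≤ 1 := by linarith [(hzIcc e).1]
    have hze0 : 0 ≤ 1 - z e := by linarith [(hzIcc e).2]
    calc (1 - z e) * Qw z e S * (f (insert e S) - f S)
        ≤ 1 * Qw z e S * (f (insert e S) - f S) := by
          apply mul_le_mul_of_nonneg_right _ hΔ
          exact mul_le_mul_of_nonneg_right hze hQ
      _ = (f (insert e S) - f S) * Qw z e S := by ring
  have hRHS : ε * ∑ e : E, y e *
      (∑ S : Finset E, ((∏ a ∈ S, z a) * ∏ a ∈ Sᶜ, (1 - z a)) * (f (insert e S) - f S))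
        ≤ ∑ e : E, (z e - x e) * Dg f z e := by
    rw [Finset.mul_sum]
    refine Finset.sum_le_sum fun e _ => ?_
    have hze : z e - x e = ε * y e := by simp [hz]
    rw [hze]
    have h1 : y e * (∑ S : Finset E, ((∏ a ∈ S, z a) * ∏ a ∈ Sᶜ, (1 - z a)) *
        (f (insert e S) - f S)) ≤ y e * Dg f z e :=
      mul_le_mul_of_nonneg_left (hinner e) (hy e).1
    calc ε * (y e * _) ≤ ε * (y e * Dg f z e) := mul_le_mul_of_nonneg_left h1 hε
      _ = ε * y e * Dg f z e := by ring
  rw [hFg, hFg]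
  exact le_trans hRHS hfin
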